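/- Let A, U be nonempty finite sets, λ > 0, γ ≥ 0, and let P be a joint probability distribution on A × U. Let L' : A × U → ℝ satisfy ∑_{a∈A} 2^{-L'(a,u)} ≤ 2^{γ} for every u ∈ U. Then ∑_{(a,u)} P(a,u)·2^{λ L'(a,u)} ≥ 2^{-λγ} · ∑_{u∈U} (∑_{a∈A} P(a,u)^{1/(1+λ)})^{1+λ}. -/

import Mathlib

open Finset Real

theorem side_info_kraft_holder
    (A U : Type*) [Fintype A] [Fintype U] [Nonempty A] [Nonempty U]
    (l : ℝ) (hl : 0 < l) (γ : ℝ) (hγ : 0 ≤ γ)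
    (P : A × U → ℝ) (hP : ∀ p, 0 ≤ P p) (hPsum : ∑ p, P p = 1)
    (L' : A × U → ℝ)
    (hKraft : ∀ u : U, ∑ a, (2 : ℝ) ^ (-(L' (a, u))) ≤ 2 ^ γ) :
    ∑ p, P p * (2 : ℝ) ^ (l * L' p) ≥
      (2 : ℝ) ^ (-(l * γ)) * ∑ u, (∑ a, (P (a, u)) ^ (1 / (1 + l))) ^ (1 + l) := by
  have h1l : (0:ℝ) < 1 + l := by linarith
  have h2 : (0:ℝ) < 2 := by norm_num
  have hpq : Real.HolderConjugate (1 + l) ((1 + l) / l) := by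
    rw [Real.holderConjugate_iff]
    constructor
    · linarith
    · rw [inv_div]
      field_simp
  have key : ∀ u : U, (∑ a, (P (a, u)) ^ (1 / (1 + l))) ^ (1 + l) ≤
      (2 : ℝ) ^ (l * γ) * ∑ a, P (a, u) * (2 : ℝ) ^ (l * L' (a, u)) := by
    intro u
    set S : ℝ := ∑ a, P (a, u) * (2 : ℝ) ^ (l * L' (a, u)) with hS
    set K : ℝ := ∑ a : A, (2 : ℝ) ^ (-(L' (a, u))) with hK
    have hSnn : 0 ≤ S := Finset.sum_nonneg fun a _ =>
      mul_nonneg (hP _) (Real.rpow_nonneg (by norm_num) _)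
    have hKnn : 0 ≤ K := Finset.sum_nonneg fun a _ => Real.rpow_nonneg (by norm_num) _
    have holder := Real.inner_le_Lp_mul_Lq_of_nonneg (Finset.univ : Finset A)
      (f := fun a => (P (a, u) * (2 : ℝ) ^ (l * L' (a, u))) ^ (1 / (1 + l)))
      (g := fun a => ((2 : ℝ) ^ (-(L' (a, u)))) ^ (l / (1 + l))) hpq
      (fun a _ => Real.rpow_nonneg (mul_nonneg (hP _) (Real.rpow_nonneg (by norm_num) _)) _)
      (fun a _ => Real.rpow_nonneg (Real.rpow_nonneg (by norm_num) _) _)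
    have e1 : ∀ a : A, (P (a, u) * (2 : ℝ) ^ (l * L' (a, u))) ^ (1 / (1 + l)) *
        ((2 : ℝ) ^ (-(L' (a, u)))) ^ (l / (1 + l)) = (P (a, u)) ^ (1 / (1 + l)) := by
      intro a
      rw [Real.mul_rpow (hP _) (Real.rpow_nonneg (by norm_num) _),
        ← Real.rpow_mul (by norm_num : (0:ℝ) ≤ 2),
        ← Real.rpow_mul (by norm_num : (0:ℝ) ≤ 2), mul_assoc,
        ← Real.rpow_add h2]
      have : l * L' (a, u) * (1 / (1 + l)) + -(L' (a, u)) * (l / (1 + l)) = 0 := by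
        field_simp
        ring
      rw [this, Real.rpow_zero, mul_one]
    have e2 : ∀ a : A, ((P (a, u) * (2 : ℝ) ^ (l * L' (a, u))) ^ (1 / (1 + l))) ^ (1 + l)
        = P (a, u) * (2 : ℝ) ^ (l * L' (a, u)) := by
      intro a
      rw [← Real.rpow_mul (mul_nonneg (hP _) (Real.rpow_nonneg (by norm_num) _)),
        one_div, inv_mul_cancel₀ h1l.ne', Real.rpow_one]
    have e3 : ∀ a : A, (((2 : ℝ) ^ (-(L' (a, u)))) ^ (l / (1 + l))) ^ ((1 + l) / l)
        = (2 : ℝ) ^ (-(L' (a, u))) := by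
      intro a
      rw [← Real.rpow_mul (Real.rpow_nonneg (by norm_num) _)]
      have : l / (1 + l) * ((1 + l) / l) = 1 := by
        field_simp
      rw [this, Real.rpow_one]
    simp only [e1, e2, e3] at holder
    rw [← hS, ← hK, one_div_div] at holder
    have hLnn : 0 ≤ ∑ a, (P (a, u)) ^ (1 / (1 + l)) :=
      Finset.sum_nonneg fun a _ => Real.rpow_nonneg (hP _) _
    calc (∑ a, (P (a, u)) ^ (1 / (1 + l))) ^ (1 + l)
        ≤ (S ^ (1 / (1 + l)) * K ^ (l / (1 + l))) ^ (1 + l) :=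
          Real.rpow_le_rpow hLnn holder h1l.le
      _ = S * K ^ l := by
          rw [Real.mul_rpow (Real.rpow_nonneg hSnn _) (Real.rpow_nonneg hKnn _),
            ← Real.rpow_mul hSnn, ← Real.rpow_mul hKnn, one_div,
            inv_mul_cancel₀ h1l.ne', Real.rpow_one]
          congr 2
          field_simp
      _ ≤ S * ((2:ℝ) ^ γ) ^ l :=
          mul_le_mul_of_nonneg_left (Real.rpow_le_rpow hKnn (hKraft u) hl.le) hSnn
      _ = (2 : ℝ) ^ (l * γ) * S := by
          rw [← Real.rpow_mul (by norm_num : (0:ℝ) ≤ 2), mul_comm γ l, mul_comm]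
  rw [ge_iff_le]
  calc (2 : ℝ) ^ (-(l * γ)) * ∑ u, (∑ a, (P (a, u)) ^ (1 / (1 + l))) ^ (1 + l)
      ≤ (2 : ℝ) ^ (-(l * γ)) * ∑ u, ((2 : ℝ) ^ (l * γ) * ∑ a, P (a, u) * (2 : ℝ) ^ (l * L' (a, u))) :=
        mul_le_mul_of_nonneg_left (Finset.sum_le_sum fun u _ => key u)
          (Real.rpow_nonneg (by norm_num) _)
    _ = ∑ u, ∑ a, P (a, u) * (2 : ℝ) ^ (l * L' (a, u)) := by
        rw [← Finset.mul_sum, ← mul_assoc, ← Real.rpow_add h2, neg_add_cancel,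
          Real.rpow_zero, one_mul]
    _ = ∑ p, P p * (2 : ℝ) ^ (l * L' p) := by
        rw [Fintype.sum_prod_type_right]
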